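/- Suppose the d-tuple A = (A_1, ..., A_d) is a row contraction, i.e., A_1* A_1 + ... + A_d* A_d <= I, and A is not strongly stable. Then the decreasing sequence Delta_N = sum over words v of length N of A^{v*} A^v converges strongly to a nonzero positive semidefinite operator Delta satisfying the homogeneous Stein equation Delta - A_1* Delta A_1 - ... - A_d* Delta A_d = 0; consequently the Stein equation H - sum_j A_j* H A_j = C* C has at least two distinct positive semidefinite solutions whenever it has one. -/

import Mathlib

open ContinuousLinearMap

noncomputable section

variable {X Y : Type*}
  [NormedAddCommGroup X] [InnerProductSpace ℂ X] [CompleteSpace X]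
  [NormedAddCommGroup Y] [InnerProductSpace ℂ Y] [CompleteSpace Y]

/-- `A^v`: for a word `v = i_N … i_1` (stored as the list `[i_N, …, i_1]`), the
product `A_{i_N} ∘ A_{i_{N-1}} ∘ ⋯ ∘ A_{i_1}`. -/
def wordProd {d : ℕ} (A : Fin d → X →L[ℂ] X) (v : List (Fin d)) : X →L[ℂ] X :=
  (v.map A).prod

/-- `A^w` for a word of length `N` encoded as a function `w : Fin N → Fin d`. -/
def funProd {d N : ℕ} (A : Fin d → X →L[ℂ] X) (w : Fin N → Fin d) : X →L[ℂ] X :=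
  wordProd A (List.ofFn w)

namespace Stmt5Aux

open RCLike Filter

local notation "⟪" x ", " y "⟫" => @inner ℂ _ _ x y

/-- Cauchy–Schwarz for a positive operator. -/
lemma cs {T : X →L[ℂ] X} (hT : T.IsPositive) (x y : X) :
    ‖⟪T x, y⟫‖ * ‖⟪T y, x⟫‖ ≤ re ⟪T x, x⟫ * re ⟪T y, y⟫ := by
  let c : PreInnerProductSpace.Core ℂ X :=
  { inner := fun u v => ⟪T u, v⟫
    conj_inner_symm := fun u v => by
      show (starRingEnd ℂ) (⟪T v, u⟫) = ⟪T u, v⟫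
      rw [inner_conj_symm, ← adjoint_inner_left T, hT.isSelfAdjoint.adjoint_eq]
    re_inner_nonneg := hT.2
    add_left := fun u v w => by simp [map_add, inner_add_left]
    smul_left := fun u v r => by simp [inner_smul_left]; ring }
  exact @InnerProductSpace.Core.inner_mul_inner_self_le ℂ X _ _ _ c x y

lemma key {T : X →L[ℂ] X} (hT : T.IsPositive) (hle : ∀ x, re ⟪T x, x⟫ ≤ ‖x‖ ^ 2) (x : X) :
    ‖T x‖ ^ 2 ≤ re ⟪T x, x⟫ := by
  have h := cs hT x (T x)
  have h1 : ⟪T x, T x⟫ = (‖T x‖ : ℂ) ^ 2 := inner_self_eq_norm_sq_to_K (T x)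
  have h2 : ⟪T (T x), x⟫ = ⟪T x, T x⟫ := by
    have h := adjoint_inner_left T x (T x)
    rwa [hT.isSelfAdjoint.adjoint_eq] at h
  rw [h2, h1] at h
  have h3 : ‖((‖T x‖ : ℂ)) ^ 2‖ = ‖T x‖ ^ 2 := by
    rw [norm_pow, Complex.norm_real, Real.norm_eq_abs, abs_norm]
  rw [h3] at h
  rcases eq_or_lt_of_le (sq_nonneg ‖T x‖) with hz | hz
  · rw [← hz]; exact hT.2 x
  · nlinarith [hle (T x), hT.re_inner_nonneg_left x, hT.re_inner_nonneg_left (T x), h]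

variable {d : ℕ}

def Δn (A : Fin d → X →L[ℂ] X) (N : ℕ) : X →L[ℂ] X :=
  ∑ w : Fin N → Fin d, adjoint (funProd A w) ∘L funProd A w

lemma Δn_apply (A : Fin d → X →L[ℂ] X) (N : ℕ) (x : X) :
    Δn A N x = ∑ w : Fin N → Fin d, adjoint (funProd A w) (funProd A w x) := by
  simp [Δn, sum_apply, comp_apply]

lemma Δn_zero (A : Fin d → X →L[ℂ] X) : Δn A 0 = 1 := by
  rw [Δn, Fintype.sum_unique]
  have h : funProd A (default : Fin 0 → Fin d) = 1 := by
    simp [funProd, wordProd, List.ofFn_zero]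
  rw [h, one_def, adjoint_id, comp_id]

lemma funProd_snoc (A : Fin d → X →L[ℂ] X) {N : ℕ} (v : Fin N → Fin d) (j : Fin d) :
    funProd A (Fin.snoc v j) = funProd A v ∘L A j := by
  rw [funProd, funProd, wordProd, wordProd, List.ofFn_succ', List.map_concat, List.prod_concat]
  simp [Fin.snoc_castSucc, Fin.snoc_last]
  rfl

lemma Δn_succ_apply (A : Fin d → X →L[ℂ] X) (N : ℕ) (x : X) :
    Δn A (N+1) x = ∑ j, adjoint (A j) (Δn A N (A j x)) := by
  rw [Δn_apply]
  rw [← Fintype.sum_equiv (Fin.snocEquiv (fun _ => Fin d))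
    (fun p : Fin d × (Fin N → Fin d) =>
      adjoint (A p.1) (adjoint (funProd A p.2) (funProd A p.2 (A p.1 x))))
    (fun w => adjoint (funProd A w) (funProd A w x))
    (fun p => by
      have e1 : (Fin.snocEquiv fun _ => Fin d) p = Fin.snoc p.2 p.1 := rfl
      rw [e1, funProd_snoc, adjoint_comp]
      rfl)]
  rw [Fintype.sum_prod_type]
  refine Finset.sum_congr rfl fun j _ => ?_
  rw [Δn_apply, map_sum]

lemma re_inner_Δn (A : Fin d → X →L[ℂ] X) (N : ℕ) (x : X) :
    re ⟪Δn A N x, x⟫ = ∑ w : Fin N → Fin d, ‖funProd A w x‖ ^ 2 := by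
  rw [Δn_apply, sum_inner, map_sum]
  congr 1
  ext w
  rw [adjoint_inner_left, inner_self_eq_norm_sq]

lemma Δn_isPositive (A : Fin d → X →L[ℂ] X) (N : ℕ) : (Δn A N).IsPositive := by
  rw [Δn]
  refine Finset.sum_induction _ IsPositive (fun a b ha hb => ha.add hb) isPositive_zero
    (fun w _ => ?_)
  have h := isPositive_one.adjoint_conj (funProd A w)
  rwa [one_def, id_comp] at h


lemma re_inner_Δn_succ (A : Fin d → X →L[ℂ] X) (N : ℕ) (x : X) :
    re ⟪Δn A (N+1) x, x⟫ = ∑ j, re ⟪Δn A N (A j x), A j x⟫ := by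
  rw [Δn_succ_apply, sum_inner, map_sum]
  refine Finset.sum_congr rfl fun j _ => ?_
  rw [adjoint_inner_left]

lemma q_antitone (A : Fin d → X →L[ℂ] X)
    (hrow : ((1 : X →L[ℂ] X) - ∑ j, adjoint (A j) ∘L A j).IsPositive) (N : ℕ) (x : X) :
    re ⟪Δn A (N+1) x, x⟫ ≤ re ⟪Δn A N x, x⟫ := by
  induction N generalizing x with
  | zero =>
    rw [re_inner_Δn_succ]
    have h0 := hrow.re_inner_nonneg_left x
    have hS : re ⟪(∑ j, adjoint (A j) ∘L A j) x, x⟫ = ∑ j, ‖A j x‖ ^ 2 := by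
      rw [sum_apply, sum_inner, map_sum]
      refine Finset.sum_congr rfl fun j _ => ?_
      rw [comp_apply, adjoint_inner_left, inner_self_eq_norm_sq]
    have h1 : re ⟪((1 : X →L[ℂ] X) - ∑ j, adjoint (A j) ∘L A j) x, x⟫
        = ‖x‖ ^ 2 - ∑ j, ‖A j x‖ ^ 2 := by
      rw [sub_apply, inner_sub_left, map_sub, hS, one_apply_eq_self, inner_self_eq_norm_sq]
    have h2 : ∀ j : Fin d, re ⟪Δn A 0 (A j x), A j x⟫ = ‖A j x‖ ^ 2 := fun j => by
      rw [Δn_zero, one_apply_eq_self, inner_self_eq_norm_sq]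
    have h3 : re ⟪Δn A 0 x, x⟫ = ‖x‖ ^ 2 := by
      rw [Δn_zero, one_apply_eq_self, inner_self_eq_norm_sq]
    rw [h1] at h0
    rw [h3]
    calc ∑ j, re ⟪Δn A 0 (A j x), A j x⟫ = ∑ j, ‖A j x‖ ^ 2 :=
          Finset.sum_congr rfl fun j _ => h2 j
    _ ≤ ‖x‖ ^ 2 := by linarith
  | succ N ih =>
    rw [re_inner_Δn_succ, re_inner_Δn_succ]
    exact Finset.sum_le_sum fun j _ => ih (A j x)

lemma diff_sq_le (A : Fin d → X →L[ℂ] X)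
    (hrow : ((1 : X →L[ℂ] X) - ∑ j, adjoint (A j) ∘L A j).IsPositive)
    {N M : ℕ} (h : N ≤ M) (x : X) :
    ‖Δn A N x - Δn A M x‖ ^ 2 ≤ re ⟪Δn A N x, x⟫ - re ⟪Δn A M x, x⟫ := by
  have hanti : ∀ y : X, Antitone (fun K => re ⟪Δn A K y, y⟫) := fun y =>
    antitone_nat_of_succ_le fun K => q_antitone A hrow K y
  have hq0 : ∀ (K : ℕ) (y : X), 0 ≤ re ⟪Δn A K y, y⟫ := fun K y =>
    (Δn_isPositive A K).re_inner_nonneg_left y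
  have h00 : ∀ y : X, re ⟪Δn A 0 y, y⟫ = ‖y‖ ^ 2 := fun y => by
    rw [Δn_zero, one_apply_eq_self, inner_self_eq_norm_sq]
  set T := Δn A N - Δn A M with hT
  have hTre : ∀ y : X, re ⟪T y, y⟫ = re ⟪Δn A N y, y⟫ - re ⟪Δn A M y, y⟫ := fun y => by
    rw [hT, sub_apply, inner_sub_left, map_sub]
  have hTpos : T.IsPositive := by
    refine ⟨isSelfAdjoint_iff_isSymmetric.mp ((Δn_isPositive A N).isSelfAdjoint.sub (Δn_isPositive A M).isSelfAdjoint), fun y => ?_⟩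
    show 0 ≤ re ⟪T y, y⟫
    rw [hTre y]
    have := hanti y h
    linarith
  have hTle : ∀ y : X, re ⟪T y, y⟫ ≤ ‖y‖ ^ 2 := fun y => by
    rw [hTre y]
    have h1 : re ⟪Δn A N y, y⟫ ≤ re ⟪Δn A 0 y, y⟫ := hanti y (Nat.zero_le N)
    have h2 := hq0 M y
    rw [h00 y] at h1
    linarith
  have hk := key hTpos hTle x
  rw [hTre x] at hk
  have hTx : T x = Δn A N x - Δn A M x := by rw [hT, sub_apply]
  rwa [hTx] at hk

lemma main {d : ℕ} (A : Fin d → X →L[ℂ] X)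
    (hrow : ((1 : X →L[ℂ] X) - ∑ j, adjoint (A j) ∘L A j).IsPositive)
    (hns : ¬ ∀ x : X, Filter.Tendsto
      (fun N => ∑ w : Fin N → Fin d, ‖funProd A w x‖ ^ 2) Filter.atTop (nhds 0)) :
    ∃ Δ : X →L[ℂ] X,
      (∀ x : X, Filter.Tendsto
        (fun N => ∑ w : Fin N → Fin d, adjoint (funProd A w) (funProd A w x))
        Filter.atTop (nhds (Δ x))) ∧
      Δ.IsPositive ∧ Δ ≠ 0 ∧
      Δ - ∑ j, adjoint (A j) ∘L Δ ∘L A j = 0 ∧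
      ∀ (C : X →L[ℂ] Y) (H : X →L[ℂ] X), H.IsPositive →
        H - ∑ j, adjoint (A j) ∘L H ∘L A j = adjoint C ∘L C →
        ∃ H' : X →L[ℂ] X, H'.IsPositive ∧
          H' - ∑ j, adjoint (A j) ∘L H' ∘L A j = adjoint C ∘L C ∧ H' ≠ H := by
  classical
  have hq0 : ∀ (N : ℕ) (x : X), 0 ≤ re ⟪Δn A N x, x⟫ := fun N x =>
    (Δn_isPositive A N).re_inner_nonneg_left x
  have hanti : ∀ x : X, Antitone (fun N => re ⟪Δn A N x, x⟫) := fun x =>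
    antitone_nat_of_succ_le fun N => q_antitone A hrow N x
  have h00 : ∀ y : X, re ⟪Δn A 0 y, y⟫ = ‖y‖ ^ 2 := fun y => by
    rw [Δn_zero, one_apply_eq_self, inner_self_eq_norm_sq]
  set L : X → ℝ := fun x => ⨅ N, re ⟪Δn A N x, x⟫ with hLdef
  have hLbdd : ∀ x : X, BddBelow (Set.range fun N => re ⟪Δn A N x, x⟫) := fun x =>
    ⟨0, by rintro r ⟨N, rfl⟩; exact hq0 N x⟩
  have hqL : ∀ x : X, Filter.Tendsto (fun N => re ⟪Δn A N x, x⟫)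
      Filter.atTop (nhds (L x)) := fun x => tendsto_atTop_ciInf (hanti x) (hLbdd x)
  have hL0 : ∀ x : X, 0 ≤ L x := fun x => le_ciInf fun N => hq0 N x
  have hLle : ∀ (M : ℕ) (x : X), L x ≤ re ⟪Δn A M x, x⟫ := fun M x => ciInf_le (hLbdd x) M
  have hcauchy : ∀ x : X, CauchySeq (fun N => Δn A N x) := by
    intro x
    apply cauchySeq_of_le_tendsto_0 (fun N => Real.sqrt (re ⟪Δn A N x, x⟫ - L x))
    · intro n m N hn hm
      wlog hnm : n ≤ m generalizing n m
      · rw [dist_comm]; exact this m n hm hn (le_of_not_ge hnm)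
      rw [dist_eq_norm]
      have h1 := diff_sq_le A hrow hnm x
      have h2 : re ⟪Δn A n x, x⟫ - re ⟪Δn A m x, x⟫ ≤ re ⟪Δn A N x, x⟫ - L x := by
        have ha := hanti x hn
        have hb := hLle m x
        linarith
      have h3 : ‖Δn A n x - Δn A m x‖ ^ 2 ≤ re ⟪Δn A N x, x⟫ - L x := le_trans h1 h2
      exact (Real.le_sqrt (norm_nonneg _) (by
        have := hLle N x
        linarith)).mpr h3
    · have h := (hqL x).sub (tendsto_const_nhds (x := L x))
      rw [sub_self] at h
      have h2 := h.sqrt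
      rwa [Real.sqrt_zero] at h2
  have hD : ∀ x : X, ∃ y : X, Filter.Tendsto (fun N => Δn A N x) Filter.atTop (nhds y) :=
    fun x => cauchySeq_tendsto_of_complete (hcauchy x)
  choose g hg using hD
  have hlinten : Filter.Tendsto (fun N x => (Δn A N : X →ₗ[ℂ] X) x) Filter.atTop (nhds g) :=
    tendsto_pi_nhds.mpr hg
  let glin : X →ₗ[ℂ] X := linearMapOfTendsto g (fun N => (Δn A N : X →ₗ[ℂ] X)) hlinten
  have hgbound : ∀ x : X, ‖glin x‖ ≤ 1 * ‖x‖ := by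
    intro x
    have hgx : glin x = g x := rfl
    rw [hgx, one_mul]
    refine le_of_tendsto (hg x).norm (Filter.Eventually.of_forall fun N => ?_)
    have hle : ∀ y : X, re ⟪Δn A N y, y⟫ ≤ ‖y‖ ^ 2 := fun y => by
      have h1 : re ⟪Δn A N y, y⟫ ≤ re ⟪Δn A 0 y, y⟫ := hanti y (Nat.zero_le N)
      rw [h00 y] at h1
      exact h1
    have hk := key (Δn_isPositive A N) hle x
    have h2 : ‖Δn A N x‖ ^ 2 ≤ ‖x‖ ^ 2 := le_trans hk (hle x)
    nlinarith [norm_nonneg (Δn A N x), norm_nonneg x]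
  let Δ : X →L[ℂ] X := LinearMap.mkContinuous glin 1 hgbound
  have hΔtendsto : ∀ x : X, Filter.Tendsto (fun N => Δn A N x) Filter.atTop (nhds (Δ x)) :=
    fun x => hg x
  have hinner : ∀ x y : X, Filter.Tendsto (fun N => ⟪Δn A N x, y⟫)
      Filter.atTop (nhds ⟪Δ x, y⟫) := fun x y => (hΔtendsto x).inner tendsto_const_nhds
  have hsym : IsSelfAdjoint Δ := by
    rw [isSelfAdjoint_iff_isSymmetric]
    intro x y
    have h1 := hinner x y
    have h2 : Filter.Tendsto (fun N => ⟪Δn A N x, y⟫) Filter.atTop (nhds ⟪x, Δ y⟫) := by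
      have h3 : ∀ N : ℕ, ⟪x, Δn A N y⟫ = ⟪Δn A N x, y⟫ := fun N =>
        ((isSelfAdjoint_iff_isSymmetric.mp (Δn_isPositive A N).isSelfAdjoint) x y).symm
      exact ((tendsto_const_nhds.inner (hΔtendsto y)).congr h3)
    exact tendsto_nhds_unique h1 h2
  have hre : ∀ x : X, re ⟪Δ x, x⟫ = L x := fun x =>
    tendsto_nhds_unique ((RCLike.continuous_re.tendsto _).comp (hinner x x)) (hqL x)
  have hΔpos : Δ.IsPositive := by
    refine ⟨isSelfAdjoint_iff_isSymmetric.mp hsym, fun x => ?_⟩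
    show 0 ≤ re ⟪Δ x, x⟫
    rw [hre x]
    exact hL0 x
  push_neg at hns
  obtain ⟨x₀, hx₀⟩ := hns
  have hL₀ : L x₀ ≠ 0 := by
    intro h
    apply hx₀
    have h1 : (fun N => ∑ w : Fin N → Fin d, ‖funProd A w x₀‖ ^ 2)
        = fun N => re ⟪Δn A N x₀, x₀⟫ := funext fun N => (re_inner_Δn A N x₀).symm
    rw [h1, ← h]
    exact hqL x₀
  have hΔne : Δ ≠ 0 := by
    intro h
    apply hL₀
    have h1 := hre x₀
    rw [h] at h1
    simpa using h1.symm
  have hstein : Δ - ∑ j, adjoint (A j) ∘L Δ ∘L A j = 0 := by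
    rw [sub_eq_zero]
    ext x
    have h1 : Filter.Tendsto (fun N => Δn A (N+1) x) Filter.atTop (nhds (Δ x)) :=
      (hΔtendsto x).comp (Filter.tendsto_add_atTop_nat 1)
    have h2 : Filter.Tendsto (fun N => ∑ j, adjoint (A j) (Δn A N (A j x))) Filter.atTop
        (nhds (∑ j, adjoint (A j) (Δ (A j x)))) :=
      tendsto_finset_sum _ fun j _ =>
        ((adjoint (A j)).continuous.tendsto _).comp (hΔtendsto (A j x))
    rw [show (fun N => Δn A (N+1) x) = fun N => ∑ j, adjoint (A j) (Δn A N (A j x)) from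
      funext fun N => Δn_succ_apply A N x] at h1
    have h3 := tendsto_nhds_unique h1 h2
    rw [sum_apply]
    simp only [comp_apply]
    exact h3
  refine ⟨Δ, ?_, hΔpos, hΔne, hstein, ?_⟩
  · intro x
    exact (hΔtendsto x).congr fun N => Δn_apply A N x
  · intro C H hH hsteinH
    refine ⟨H + Δ, hH.add hΔpos, ?_, ?_⟩
    · have expand : ∑ j, adjoint (A j) ∘L (H + Δ) ∘L A j
          = (∑ j, adjoint (A j) ∘L H ∘L A j) + ∑ j, adjoint (A j) ∘L Δ ∘L A j := by
        rw [← Finset.sum_add_distrib]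
        refine Finset.sum_congr rfl fun j _ => ?_
        rw [add_comp, comp_add]
      rw [expand]
      calc H + Δ - ((∑ j, adjoint (A j) ∘L H ∘L A j) + ∑ j, adjoint (A j) ∘L Δ ∘L A j)
          = (H - ∑ j, adjoint (A j) ∘L H ∘L A j) + (Δ - ∑ j, adjoint (A j) ∘L Δ ∘L A j) := by
            abel
      _ = adjoint C ∘L C := by rw [hsteinH, hstein, add_zero]
    · intro hEq
      exact hΔne (add_eq_left.mp hEq)

end Stmt5Aux

/-- If A is a row contraction (in the sense ∑_j A_j* A_j ≤ I) which is not strongly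
stable, then Δ_N = ∑_{|v|=N} A^{v*} A^v converges strongly to a nonzero positive
semidefinite Δ solving the homogeneous Stein equation; consequently the Stein
equation `H - ∑_j A_j* H A_j = C* C` has at least two distinct positive
semidefinite solutions whenever it has one. -/


theorem stmt5 {d : ℕ} (A : Fin d → X →L[ℂ] X)
    (hrow : ((1 : X →L[ℂ] X) - ∑ j, adjoint (A j) ∘L A j).IsPositive)
    (hns : ¬ ∀ x : X, Filter.Tendsto
      (fun N => ∑ w : Fin N → Fin d, ‖funProd A w x‖ ^ 2) Filter.atTop (nhds 0)) :
    ∃ Δ : X →L[ℂ] X,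
      (∀ x : X, Filter.Tendsto
        (fun N => ∑ w : Fin N → Fin d, adjoint (funProd A w) (funProd A w x))
        Filter.atTop (nhds (Δ x))) ∧
      Δ.IsPositive ∧ Δ ≠ 0 ∧
      Δ - ∑ j, adjoint (A j) ∘L Δ ∘L A j = 0 ∧
      ∀ (C : X →L[ℂ] Y) (H : X →L[ℂ] X), H.IsPositive →
        H - ∑ j, adjoint (A j) ∘L H ∘L A j = adjoint C ∘L C →
        ∃ H' : X →L[ℂ] X, H'.IsPositive ∧
          H' - ∑ j, adjoint (A j) ∘L H' ∘L A j = adjoint C ∘L C ∧ H' ≠ H := by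
  exact Stmt5Aux.main A hrow hns

end
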